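/- Let k be a field and R a k-algebra generated by a finite-dimensional subspace V containing 1, and suppose R is algebraic over k. If the associated graded ring gr R satisfies a polynomial identity, then R is finite dimensional over k. -/

import Mathlib

/-- A realization of the associated graded ring `gr R = ⊕_{i≥0} V^i/V^{i-1}` of the
filtration of `R` by the powers of the generating subspace `V` (with `V^0 = k`): a ring
`A` together with, for each `i`, a linear map `φ i : V^i → A` which is "reduction modulo
`V^{i-1}` onto the `i`-th homogeneous component", such that `A` is the internal direct
sum of the images, `φ` sends `1` to `1` and is multiplicative. -/
structure GrRealization (k R A : Type) [Field k] [Ring R] [Algebra k R]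
    [Ring A] [Algebra k A] (V : Submodule k R) where
  φ : ∀ i : ℕ, (V ^ i : Submodule k R) →ₗ[k] A
  map_one : φ 0 ⟨1, by rw [pow_zero]; exact Submodule.one_le.mp le_rfl⟩ = 1
  ker_zero : LinearMap.ker (φ 0) = ⊥
  ker_succ : ∀ i : ℕ,
    LinearMap.ker (φ (i + 1)) = (V ^ i).comap (V ^ (i + 1) : Submodule k R).subtype
  map_mul : ∀ (i j : ℕ) (x : (V ^ i : Submodule k R)) (y : (V ^ j : Submodule k R)),
    φ (i + j) ⟨(x : R) * (y : R), by
      rw [pow_add]; exact Submodule.mul_mem_mul x.2 y.2⟩ = φ i x * φ j y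
  indep : iSupIndep fun i : ℕ => LinearMap.range (φ i)
  span_top : (⨆ i : ℕ, LinearMap.range (φ i)) = ⊤
/-- A ring satisfies a polynomial identity: there is a nonzero (multilinear) identity
`∑_σ c_σ x_{σ 1} ⋯ x_{σ n} = 0` with some coefficient `±1`. -/
def SatisfiesPolyIdentity (A : Type) [Ring A] : Prop :=
  ∃ n : ℕ, 0 < n ∧ ∃ c : Equiv.Perm (Fin n) → ℤ,
    (∃ σ, c σ = 1 ∨ c σ = -1) ∧
    ∀ a : Fin n → A,
      ∑ σ : Equiv.Perm (Fin n), c σ • ((List.finRange n).map fun i => a (σ i)).prod = 0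


namespace PIGr
open List



variable {α : Type} [LinearOrder α]

/-- `Rel x y` : `x` is lexicographically bigger than `y`, with the first difference
occurring within the overlap of the two words. -/
def Rel (x y : List α) : Prop :=
  ∃ (c t₁ t₂ : List α) (a b : α), x = c ++ a :: t₁ ∧ y = c ++ b :: t₂ ∧ b < a

lemma lex_decomp : ∀ {x y : List α}, x.length = y.length → List.Lex (· < ·) x y →
    ∃ (c t₁ t₂ : List α) (a b : α), x = c ++ a :: t₁ ∧ y = c ++ b :: t₂ ∧ a < b := by
  intro x y hlen h
  induction h with
  | nil => simp at hlen
  | @rel a l₁ b l₂ hab => exact ⟨[], l₁, l₂, a, b, by simp, by simp, hab⟩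
  | @cons a l₁ l₂ h ih =>
      obtain ⟨c, t₁, t₂, x, y, h1, h2, hxy⟩ := ih (by simpa using hlen)
      exact ⟨a :: c, t₁, t₂, x, y, by simp [h1], by simp [h2], hxy⟩

lemma rel_of_prefix {x y a b s t : List α} (hx : x = a ++ s) (hy : y = b ++ t)
    (hlen : b.length = a.length) (h : List.Lex (· < ·) b a) : Rel x y := by
  obtain ⟨c, t₁, t₂, p, q, h1, h2, hpq⟩ := lex_decomp hlen h
  exact ⟨c, t₂ ++ s, t₁ ++ t, q, p, by simp [hx, h2], by simp [hy, h1], hpq⟩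

lemma Rel.lex_append {x y : List α} (h : Rel x y) (s t : List α) :
    List.Lex (· < ·) (y ++ t) (x ++ s) := by
  obtain ⟨c, t₁, t₂, a, b, h1, h2, hba⟩ := h
  rw [h1, h2]
  simp only [append_assoc, cons_append]
  exact List.Lex.append_left _ (List.Lex.rel hba) c

lemma lex_append_of_lex {x y : List α} (hlen : x.length = y.length)
    (h : List.Lex (· < ·) x y) (s t : List α) :
    List.Lex (· < ·) (x ++ s) (y ++ t) := by
  have := (rel_of_prefix (rfl : y ++ t = y ++ t) (rfl : x ++ s = x ++ s) hlen h).lex_append [] []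
  simpa using this



lemma flatten_split {n : ℕ} (g : Fin n → List α) (j : Fin n) :
    ((finRange n).map g).flatten =
      (((finRange n).take j).map g).flatten ++
        (g j ++ (((finRange n).drop (j+1)).map g).flatten) := by
  conv_lhs => rw [← List.take_append_drop (j : ℕ) (finRange n)]
  have hj : (j : ℕ) < (finRange n).length := by simp [j.isLt]
  rw [List.drop_eq_getElem_cons hj]
  simp

lemma mem_take_finRange {n : ℕ} {j : Fin n} {i : Fin n}
    (h : i ∈ (finRange n).take (j : ℕ)) : (i : ℕ) < (j : ℕ) := by
  obtain ⟨k, hk, hik⟩ := List.mem_iff_getElem.mp h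
  have hk' : k < (j:ℕ) := lt_of_lt_of_le hk (by simp [List.length_take])
  rw [List.getElem_take] at hik
  simp only [List.getElem_finRange] at hik
  subst hik
  simpa using hk'

lemma length_flatten_map {n : ℕ} (g : Fin n → List α) :
    (((finRange n).map g).flatten).length = ∑ i : Fin n, (g i).length := by
  rw [List.length_flatten]
  rw [Fin.sum_univ_def]
  simp [Function.comp_def]

lemma perm_flatten_lt {n : ℕ} (v : Fin n → List α)
    (hv : ∀ i j : Fin n, i < j → Rel (v i) (v j)) (σ : Equiv.Perm (Fin n)) (hσ : σ ≠ 1) :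
    List.Lex (· < ·) (((finRange n).map (v ∘ σ)).flatten) (((finRange n).map v).flatten) := by
  classical
  have hne : (Finset.univ.filter fun i : Fin n => σ i ≠ i).Nonempty := by
    by_contra h
    exact hσ (Equiv.ext fun i => by
      have := Finset.filter_eq_empty_iff.mp (Finset.not_nonempty_iff_eq_empty.mp h)
        (Finset.mem_univ i)
      simpa using this)
  set j := (Finset.univ.filter fun i : Fin n => σ i ≠ i).min' hne with hjdef
  have hjmem : σ j ≠ j := by
    have := (Finset.univ.filter fun i : Fin n => σ i ≠ i).min'_mem hne
    rw [← hjdef] at this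
    simpa using this
  have hmin : ∀ i : Fin n, i < j → σ i = i := by
    intro i hi
    by_contra h
    exact absurd ((Finset.univ.filter fun i : Fin n => σ i ≠ i).min'_le i (by simpa using h))
      (by rw [← hjdef]; exact not_le.mpr hi)
  have hjlt : j < σ j := by
    rcases lt_trichotomy (σ j) j with h | h | h
    · exact absurd (σ.injective (hmin (σ j) h)) hjmem
    · exact absurd h hjmem
    · exact h
  -- blocks before j agree
  have htake : ((finRange n).take (j:ℕ)).map (v ∘ σ) = ((finRange n).take (j:ℕ)).map v := by
    apply List.map_congr_left
    intro i hi
    have : σ i = i := hmin i (mem_take_finRange hi)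
    simp [Function.comp, this]
  rw [flatten_split (v ∘ σ) j, flatten_split v j, htake]
  apply List.Lex.append_left
  have hrel : Rel (v j) (v (σ j)) := hv j (σ j) hjlt
  obtain ⟨c, t₁, t₂, a, b, h1, h2, hba⟩ := hrel
  simp only [Function.comp_apply, h1, h2, append_assoc, cons_append]
  exact List.Lex.append_left _ (List.Lex.rel hba) c

lemma perm_flatten_length {n : ℕ} (v : Fin n → List α) (σ : Equiv.Perm (Fin n)) :
    (((finRange n).map (v ∘ σ)).flatten).length = (((finRange n).map v).flatten).length := by
  rw [length_flatten_map, length_flatten_map]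
  exact Equiv.sum_comp σ fun i => (v i).length





/-! ### Infinite words -/

/-- The length-`L` window of `W` at position `i`. -/
def win {β : Type} (W : ℕ → β) (i L : ℕ) : List β :=
  (List.range L).map fun p => W (i + p)

variable {β : Type} (W : ℕ → β)

@[simp] lemma length_win (i L : ℕ) : (win W i L).length = L := by simp [win]

lemma win_add (i s t : ℕ) : win W i (s + t) = win W i s ++ win W (i + s) t := by
  simp only [win, List.range_add, List.map_append, List.map_map]
  congr 1
  apply List.map_congr_left
  intro p _
  simp [Function.comp, Nat.add_assoc]

lemma win_succ (i L : ℕ) : win W i (L + 1) = win W i L ++ [W (i + L)] := by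
  simp [win, List.range_succ]

lemma win_cons (i L : ℕ) : win W i (L + 1) = W i :: win W (i + 1) L := by
  simp only [win, List.range_succ_eq_map, List.map_cons, List.map_map]
  congr 1
  apply List.map_congr_left
  intro p _
  simp [Function.comp, Nat.succ_eq_add_one]
  ring_nf

lemma take_win (i L m : ℕ) (h : m ≤ L) : (win W i L).take m = win W i m := by
  simp [win, ← List.map_take, List.take_range, Nat.min_eq_left h]

/-- Sets of naturals that contain arbitrarily large elements are infinite. -/
lemma infinite_of_unbounded {S : Set ℕ} (h : ∀ N, ∃ i, N ≤ i ∧ i ∈ S) : S.Infinite := by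
  apply Set.infinite_of_not_bddAbove
  rintro ⟨b, hb⟩
  obtain ⟨i, hi, hiS⟩ := h (b + 1)
  exact absurd (hb hiS) (by omega)

lemma unbounded_of_infinite {S : Set ℕ} (h : S.Infinite) : ∀ N, ∃ i, N ≤ i ∧ i ∈ S := by
  intro N
  obtain ⟨b, hbS, hb⟩ := h.exists_gt N
  exact ⟨b, le_of_lt hb, hbS⟩

/-- Infinite pigeonhole: a function into a finite type takes some value at
arbitrarily large elements of an infinite set. -/
lemma exists_freq {γ : Type} [Finite γ] (f : ℕ → γ) {S : Set ℕ} (hS : S.Infinite) :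
    ∃ y, ∀ N, ∃ i, N ≤ i ∧ i ∈ S ∧ f i = y := by
  haveI : Infinite S := Set.infinite_coe_iff.mpr hS
  obtain ⟨y, hy⟩ := Finite.exists_infinite_fiber (fun i : S => f i)
  refine ⟨y, fun N => ?_⟩
  have hpre : ((fun i : S => f i) ⁻¹' {y} : Set S).Infinite := Set.infinite_coe_iff.mp hy
  have himg := hpre.image (Set.injOn_of_injective Subtype.val_injective)
  have hinf : {i | i ∈ S ∧ f i = y}.Infinite := by
    refine Set.Infinite.mono ?_ himg
    rintro _ ⟨⟨i, hiS⟩, hfi, rfl⟩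
    exact ⟨hiS, hfi⟩
  obtain ⟨i, hi, him⟩ := unbounded_of_infinite hinf N
  exact ⟨i, hi, him.1, him.2⟩

/-- Factors of `W` of length `L` occurring at arbitrarily large positions. -/
def Freq (L : ℕ) : Set (List β) :=
  {u | u.length = L ∧ ∀ N, ∃ i, N ≤ i ∧ win W i L = u}

variable [Finite β]

lemma freq_finite (L : ℕ) : (Freq W L).Finite :=
  (List.finite_length_eq β L).subset fun _ hu => hu.1

lemma freq_nonempty (L : ℕ) : (Freq W L).Nonempty := by
  haveI : Finite {l : List β // l.length = L} := (List.finite_length_eq β L).to_subtype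
  obtain ⟨y, hy⟩ := exists_freq (fun i => (⟨win W i L, by simp⟩ :
      {l : List β // l.length = L})) (Set.infinite_univ (α := ℕ))
  refine ⟨(y : List β), y.2, fun N => ?_⟩
  obtain ⟨i, hi, -, hfi⟩ := hy N
  exact ⟨i, hi, by rw [← congrArg Subtype.val hfi]⟩

lemma freq_infinite_occ {L : ℕ} {u : List β} (hu : u ∈ Freq W L) :
    {i | win W i L = u}.Infinite :=
  infinite_of_unbounded fun N => by
    obtain ⟨i, hi, h⟩ := hu.2 N; exact ⟨i, hi, h⟩

lemma freq_take {L : ℕ} {u : List β} (hu : u ∈ Freq W (L + 1)) : u.take L ∈ Freq W L := by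
  refine ⟨by simp [List.length_take, hu.1], fun N => ?_⟩
  obtain ⟨i, hi, h⟩ := hu.2 N
  refine ⟨i, hi, ?_⟩
  rw [← h, win_succ, List.take_left' (by simp)]

lemma freq_extend {L : ℕ} {u : List β} (hu : u ∈ Freq W L) :
    ∃ a, u ++ [a] ∈ Freq W (L + 1) := by
  obtain ⟨y, hy⟩ := exists_freq (fun i => W (i + L)) (freq_infinite_occ W hu)
  refine ⟨y, by simp [hu.1], fun N => ?_⟩
  obtain ⟨i, hi, hiu, hfy⟩ := hy N
  exact ⟨i, hi, by rw [win_succ, hiu, hfy]⟩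



/-- Eventually, every window is a frequent factor. -/
lemma exists_freq_bound (L : ℕ) : ∃ P, ∀ i, P ≤ i → win W i L ∈ Freq W L := by
  have hT : {i | win W i L ∉ Freq W L}.Finite := by
    have hsub : {i | win W i L ∉ Freq W L} ⊆
        ⋃ u ∈ {u : List β | u.length = L ∧ u ∉ Freq W L}, {i | win W i L = u} := by
      intro i hi
      exact Set.mem_biUnion ⟨by simp, hi⟩ rfl
    refine Set.Finite.subset (Set.Finite.biUnion
      ((List.finite_length_eq β L).subset fun u hu => hu.1) fun u hu => ?_) hsub
    by_contra hinf
    refine hu.2 ⟨hu.1, fun N => ?_⟩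
    obtain ⟨i, hi, him⟩ := unbounded_of_infinite hinf N
    exact ⟨i, hi, him⟩
  obtain ⟨b, hb⟩ := hT.bddAbove
  refine ⟨b + 1, fun i hi => ?_⟩
  by_contra h
  exact absurd (hb h) (by omega)

lemma freq_card_lt (hW : ∀ i j : ℕ, i < j → ∃ x, W (i + x) ≠ W (j + x))
    (L : ℕ) (hL : 1 ≤ L) :
    Nat.card (Freq W L) < Nat.card (Freq W (L + 1)) := by
  haveI hF1 : Finite (Freq W L) := (freq_finite W L).to_subtype
  haveI hF2 : Finite (Freq W (L + 1)) := (freq_finite W (L + 1)).to_subtype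
  set g : Freq W (L + 1) → Freq W L := fun u => ⟨u.1.take L, freq_take W u.2⟩ with hg
  have hsurj : Function.Surjective g := by
    rintro ⟨u, hu⟩
    obtain ⟨a, ha⟩ := freq_extend W hu
    exact ⟨⟨u ++ [a], ha⟩, Subtype.ext (List.take_left' hu.1)⟩
  have hle := Nat.card_le_card_of_surjective g hsurj
  rcases lt_or_eq_of_le hle with h | h
  · exact h
  exfalso
  have hbij : Function.Bijective g :=
    (Nat.bijective_iff_surjective_and_card g).mpr ⟨hsurj, h.symm⟩
  obtain ⟨P, hP⟩ := exists_freq_bound W (L + 1)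
  have step : ∀ i j, P ≤ i → P ≤ j → win W i L = win W j L →
      win W (i + 1) L = win W (j + 1) L ∧ W i = W j := by
    intro i j hi hj hij
    have h1 : win W i (L + 1) = win W j (L + 1) := by
      have := hbij.injective (a₁ := ⟨win W i (L+1), hP i hi⟩) (a₂ := ⟨win W j (L+1), hP j hj⟩)
        (Subtype.ext (by
          show (win W i (L+1)).take L = (win W j (L+1)).take L
          rw [take_win W _ _ _ (Nat.le_succ L), take_win W _ _ _ (Nat.le_succ L), hij]))
      exact congrArg Subtype.val this
    rw [win_cons, win_cons] at h1
    exact ⟨(List.cons_eq_cons.mp h1).2, (List.cons_eq_cons.mp h1).1⟩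
  haveI : Infinite {i : ℕ // P ≤ i} :=
    Set.infinite_coe_iff.mpr (infinite_of_unbounded fun N =>
      ⟨max N P, le_max_left .., show P ≤ max N P from le_max_right ..⟩)
  haveI : Finite {l : List β // l.length = L} := (List.finite_length_eq β L).to_subtype
  obtain ⟨⟨i₀, hi₀⟩, ⟨j₀, hj₀⟩, hne, heq⟩ := Finite.exists_ne_map_eq_of_infinite
    (fun i : {i : ℕ // P ≤ i} => (⟨win W i.1 L, by simp⟩ : {l : List β // l.length = L}))
  have heq' : win W i₀ L = win W j₀ L := congrArg Subtype.val heq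
  have hall : ∀ x, win W (i₀ + x) L = win W (j₀ + x) L := by
    intro x
    induction x with
    | zero => simpa using heq'
    | succ m ih =>
        have := (step (i₀ + m) (j₀ + m) (le_trans hi₀ (Nat.le_add_right ..))
          (le_trans hj₀ (Nat.le_add_right ..)) ih).1
        simpa [Nat.add_assoc] using this
  have hletters : ∀ x, W (i₀ + x) = W (j₀ + x) := fun x =>
    (step (i₀ + x) (j₀ + x) (le_trans hi₀ (Nat.le_add_right ..))
      (le_trans hj₀ (Nat.le_add_right ..)) (hall x)).2
  have hne' : i₀ ≠ j₀ := fun h => hne (Subtype.ext h)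
  rcases lt_or_gt_of_ne hne' with h' | h'
  · obtain ⟨x, hx⟩ := hW i₀ j₀ h'
    exact hx (hletters x)
  · obtain ⟨x, hx⟩ := hW j₀ i₀ h'
    exact hx (hletters x).symm

lemma freq_card_ge (hW : ∀ i j : ℕ, i < j → ∃ x, W (i + x) ≠ W (j + x)) :
    ∀ n, 1 ≤ n → n ≤ Nat.card (Freq W n) := by
  intro n hn
  induction n with
  | zero => omega
  | succ m ih =>
      rcases Nat.eq_or_lt_of_le hn with h | h
      · haveI : Finite (Freq W 1) := (freq_finite W 1).to_subtype
        haveI : Nonempty (Freq W 1) := (freq_nonempty W 1).to_subtype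
        rw [← h]
        exact Nat.one_le_iff_ne_zero.mpr (Nat.card_ne_zero.mpr ⟨‹_›, ‹_›⟩)
      · have hm : 1 ≤ m := by omega
        exact Nat.succ_le_of_lt (lt_of_le_of_lt (ih hm) (freq_card_lt W hW m hm))


lemma flatten_windows {β : Type} (W : ℕ → β) :
    ∀ (m : ℕ) (q : ℕ → ℕ) (len : ℕ → ℕ),
    (∀ p, p + 1 < m → q (p + 1) = q p + len p) →
    ((range m).map fun p => win W (q p) (len p)).flatten =
      win W (q 0) (((range m).map len).sum) := by
  intro m
  induction m with
  | zero => intro q len _; simp [win]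
  | succ m ih =>
      intro q len hcons
      rw [List.range_succ_eq_map]
      simp only [List.map_cons, List.map_map, List.flatten_cons, List.sum_cons]
      have h1 : (fun p => win W (q p) (len p)) ∘ Nat.succ
          = fun p => win W (q (p + 1)) (len (p + 1)) := rfl
      have h2 : len ∘ Nat.succ = fun p => len (p + 1) := rfl
      rw [h1, h2]
      have ih' := ih (fun p => q (p + 1)) (fun p => len (p + 1))
        (fun p hp => hcons (p + 1) (by omega))
      simp only [Nat.zero_add] at ih'
      rw [ih']
      rcases Nat.eq_zero_or_pos m with hm | hm
      · subst hm; simp [win]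
      · have hq1' : q 1 = q 0 + len 0 := hcons 0 (by omega)
        rw [hq1', ← win_add]

section Blocks

variable {β : Type} (W : ℕ → β) [Finite β] [LinearOrder β]

theorem exists_blocks (hW : ∀ i j : ℕ, i < j → ∃ x, W (i + x) ≠ W (j + x))
    (n : ℕ) (hn : 1 ≤ n) :
    ∃ (i L : ℕ) (v : Fin n → List β),
      (∀ a b : Fin n, a < b → Rel (v a) (v b)) ∧
      ((finRange n).map v).flatten = win W i L := by
  classical
  -- Step C : a strictly decreasing chain of n frequent factors of length n
  have hcard : n ≤ ((freq_finite W n).toFinset).card := by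
    have := freq_card_ge W hW n hn
    rwa [← Set.ncard_eq_toFinset_card (Freq W n) (freq_finite W n)]
  obtain ⟨t, hts, htcard⟩ := Finset.exists_subset_card_eq hcard
  set e := t.orderIsoOfFin htcard with he
  set a : Fin n → List β := fun i => (e i.rev : List β) with ha
  have hamem : ∀ i, a i ∈ Freq W n := by
    intro i
    have : (e i.rev : List β) ∈ t := (e i.rev).2
    have := hts this
    rwa [Set.Finite.mem_toFinset] at this
  have hdec : ∀ i j : Fin n, i < j → List.Lex (· < ·) (a j) (a i) := by
    intro i j hij
    have : j.rev < i.rev := Fin.rev_lt_rev.mpr hij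
    have h2 : e j.rev < e i.rev := e.strictMono this
    exact h2
  -- Step D : positions
  set a' : ℕ → List β := fun m => a ⟨m % n, Nat.mod_lt _ (by omega)⟩ with ha'
  have ha'mem : ∀ m, a' m ∈ Freq W n := fun m => hamem _
  set q : ℕ → ℕ := fun m => Nat.rec (Classical.choose ((ha'mem 0).2 0))
    (fun m qm => Classical.choose ((ha'mem (m + 1)).2 (qm + n))) m with hqdef
  have hq1 : ∀ m, win W (q m) n = a' m := by
    intro m
    cases m with
    | zero => exact (Classical.choose_spec ((ha'mem 0).2 0)).2
    | succ m => exact (Classical.choose_spec ((ha'mem (m + 1)).2 (q m + n))).2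
  have hq2 : ∀ m, q m + n ≤ q (m + 1) := fun m =>
    (Classical.choose_spec ((ha'mem (m + 1)).2 (q m + n))).1
  -- Step E : blocks
  set len : ℕ → ℕ := fun p => if p + 1 < n then q (p + 1) - q p else n with hlen
  have hlenge : ∀ p, n ≤ len p := by
    intro p
    have hrfl : len p = if p + 1 < n then q (p + 1) - q p else n := rfl
    rw [hrfl]
    split
    · have := hq2 p; omega
    · omega
  set g : ℕ → List β := fun p => win W (q p) (len p) with hg
  refine ⟨q 0, ((range n).map len).sum, fun i => g i.val, ?_, ?_⟩
  · intro i j hij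
    have hi : (g i.val).take n = win W (q i.val) n := take_win W _ _ _ (hlenge _)
    have hj : (g j.val).take n = win W (q j.val) n := take_win W _ _ _ (hlenge _)
    refine rel_of_prefix (x := g i.val) (y := g j.val)
      (a := win W (q i.val) n) (b := win W (q j.val) n)
      (s := (g i.val).drop n) (t := (g j.val).drop n) ?_ ?_ (by simp) ?_
    · rw [← hi]; exact (List.take_append_drop n (g i.val)).symm
    · rw [← hj]; exact (List.take_append_drop n (g j.val)).symm
    · rw [hq1, hq1]
      have hmi : (i.val : ℕ) % n = i.val := Nat.mod_eq_of_lt i.isLt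
      have hmj : (j.val : ℕ) % n = j.val := Nat.mod_eq_of_lt j.isLt
      have haj : a' (j : ℕ) = a j := congrArg a (Fin.ext hmj)
      rw [haj]
      have hai : a' (i : ℕ) = a i := congrArg a (Fin.ext hmi)
      rw [hai]
      exact hdec i j hij
  · have hmap : (finRange n).map (fun i : Fin n => g i.val) = (range n).map g := by
      rw [show (fun i : Fin n => g i.val) = g ∘ Fin.val from rfl, ← List.map_map,
        List.map_coe_finRange_eq_range]
    rw [hmap]
    exact flatten_windows W n q len (fun p hp => by
      have := hq2 p
      rw [hlen]
      simp only [hp, if_pos]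
      omega)

end Blocks

/-! ### The algebra part -/

section Algebra

variable {k R A : Type} [Field k] [Ring R] [Algebra k R] [Ring A] [Algebra k A]
  {V : Submodule k R} (h1 : (1 : R) ∈ V) (G : GrRealization k R A V)
  {d : ℕ} (b : Fin d → V)

include h1 in
/-- powers of `V` are increasing -/
lemma pow_le_pow_V {s t : ℕ} (hst : s ≤ t) : V ^ s ≤ V ^ t := by
  induction t with
  | zero => rw [Nat.le_zero.mp hst]
  | succ t ih =>
      rcases Nat.eq_or_lt_of_le hst with h | h
      · rw [h]
      · refine le_trans (ih (by omega)) ?_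
        intro x hx
        have := Submodule.mul_mem_mul hx h1
        rwa [mul_one, ← pow_succ] at this

/-- The product in `R` of the word `l`. -/
def wProd (l : List (Fin d)) : R := (l.map fun i => ((b i : R))).prod

lemma wProd_mem (l : List (Fin d)) : wProd b l ∈ V ^ l.length := by
  induction l with
  | nil =>
      show (1 : R) ∈ V ^ 0
      rw [pow_zero]
      exact Submodule.one_le.mp le_rfl
  | cons i l ih =>
      show ((b i : R)) * wProd b l ∈ V ^ (l.length + 1)
      rw [pow_succ']
      exact Submodule.mul_mem_mul (b i).2 ih

/-- The image of the word `l` in the associated graded ring. -/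
def wA (l : List (Fin d)) : A := G.φ l.length ⟨wProd b l, wProd_mem b l⟩

lemma phi_congr {i j : ℕ} (h : i = j) (x : (V ^ i : Submodule k R)) (y : (V ^ j : Submodule k R))
    (hxy : (x : R) = (y : R)) : G.φ i x = G.φ j y := by
  subst h
  rw [Subtype.ext hxy]

lemma wA_nil : wA G b [] = 1 := by
  rw [wA, ← G.map_one]
  exact phi_congr G rfl _ _ (by simp [wProd])

lemma wA_append (l₁ l₂ : List (Fin d)) : wA G b (l₁ ++ l₂) = wA G b l₁ * wA G b l₂ :=
  (phi_congr G List.length_append ⟨wProd b (l₁ ++ l₂), wProd_mem b (l₁ ++ l₂)⟩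
      ⟨wProd b l₁ * wProd b l₂, by
        rw [pow_add]; exact Submodule.mul_mem_mul (wProd_mem b l₁) (wProd_mem b l₂)⟩
      (by simp [wProd])).trans
    (G.map_mul l₁.length l₂.length ⟨wProd b l₁, wProd_mem b l₁⟩ ⟨wProd b l₂, wProd_mem b l₂⟩)

lemma wA_flatten (L : List (List (Fin d))) : wA G b L.flatten = (L.map (wA G b)).prod := by
  induction L with
  | nil => simpa using wA_nil G b
  | cons l L ih => rw [List.flatten_cons, wA_append G b, ih, List.map_cons, List.prod_cons]

lemma wProd_replicate (l : List (Fin d)) (e : ℕ) :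
    wProd b ((List.replicate e l).flatten) = wProd b l ^ e := by
  induction e with
  | zero => simp [wProd]
  | succ e ih =>
      rw [List.replicate_succ, List.flatten_cons, pow_succ']
      show (((l ++ (List.replicate e l).flatten)).map fun i => ((b i : R))).prod = _
      rw [List.map_append, List.prod_append]
      exact congrArg _ ih

include h1 in
/-- Every nonempty word is "nilpotent" in the graded ring: some power of it vanishes. -/
lemma exists_replicate_zero [Nontrivial R] [Algebra.IsAlgebraic k R]
    (l : List (Fin d)) (hl : l ≠ []) :
    ∃ e, 1 ≤ e ∧ wA G b ((List.replicate e l).flatten) = 0 := by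
  set r : R := wProd b l with hr
  set m : ℕ := l.length with hm
  have hm1 : 1 ≤ m := by
    rw [hm]
    cases l with
    | nil => exact absurd rfl hl
    | cons x t => simp
  obtain ⟨p, hp, hpr⟩ := (Algebra.IsAlgebraic.isAlgebraic (R := k) r : IsAlgebraic k r)
  set e := p.natDegree with he
  have he1 : 1 ≤ e := by
    by_contra h
    have h0 : p.natDegree = 0 := by omega
    have := Polynomial.eq_C_of_natDegree_eq_zero h0
    rw [this] at hpr
    simp only [Polynomial.aeval_C] at hpr
    have : p.coeff 0 = 0 := by
      have hinj : Function.Injective (algebraMap k R) := RingHom.injective _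
      exact hinj (by simpa using hpr)
    rw [this] at ‹p = _›
    simp only [map_zero] at ‹p = _›
    exact hp ‹p = _›
  have hsum : ∑ i ∈ Finset.range (e + 1), p.coeff i • r ^ i = 0 := by
    rw [← Polynomial.aeval_eq_sum_range (p := p) r]
    exact hpr
  have hc : p.coeff e ≠ 0 := by
    have := Polynomial.leadingCoeff_ne_zero.mpr hp
    rwa [Polynomial.leadingCoeff] at this
  have hre : r ^ e ∈ V ^ (m * e - 1) := by
    rw [Finset.sum_range_succ] at hsum
    have hsplit : p.coeff e • r ^ e = -∑ i ∈ Finset.range e, p.coeff i • r ^ i :=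
      eq_neg_of_add_eq_zero_left (by rw [add_comm]; exact hsum)
    have hmem : (∑ i ∈ Finset.range e, p.coeff i • r ^ i) ∈ V ^ (m * e - 1) := by
      apply Submodule.sum_mem
      intro i hi
      rw [Finset.mem_range] at hi
      apply Submodule.smul_mem
      have hpow : r ^ i ∈ V ^ (m * i) := by
        rw [pow_mul]
        exact Submodule.pow_mem_pow _ (wProd_mem b l) i
      refine pow_le_pow_V h1 ?_ hpow
      have h2 : m * i ≤ m * (e - 1) := Nat.mul_le_mul_left m (by omega)
      have h3 : m * (e - 1) = m * e - m := by
        rw [Nat.mul_sub]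
        simp
      have h4 : m * 1 ≤ m * e := Nat.mul_le_mul_left m he1
      omega
    have : r ^ e = (p.coeff e)⁻¹ • (p.coeff e • r ^ e) := by
      rw [smul_smul, inv_mul_cancel₀ hc, one_smul]
    rw [this, hsplit]
    exact Submodule.smul_mem _ _ (Submodule.neg_mem _ hmem)
  refine ⟨e, he1, ?_⟩
  have h5 : 1 ≤ m * e := le_trans hm1 (Nat.le_mul_of_pos_right m (by omega))
  have h' : m * e - 1 + 1 = m * e := by omega
  have hlen : ((List.replicate e l).flatten).length = (m * e - 1) + 1 := by
    rw [List.length_flatten, List.map_replicate, List.sum_replicate, smul_eq_mul]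
    conv_lhs => rw [Nat.mul_comm]
    rw [← hm]
    omega
  have hmem2 : r ^ e ∈ (V ^ ((m * e - 1) + 1) : Submodule k R) := by
    rw [h', pow_mul]
    exact Submodule.pow_mem_pow _ (wProd_mem b l) e
  have heq2 : wA G b ((List.replicate e l).flatten) = G.φ ((m * e - 1) + 1) ⟨r ^ e, hmem2⟩ :=
    phi_congr G hlen _ _ (wProd_replicate b l e)
  rw [heq2]
  have hker := G.ker_succ (m * e - 1)
  have hmem3 : (⟨r ^ e, hmem2⟩ : (V ^ ((m * e - 1) + 1) : Submodule k R)) ∈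
      LinearMap.ker (G.φ ((m * e - 1) + 1)) := by
    rw [hker]
    exact hre
  exact LinearMap.mem_ker.mp hmem3

end Algebra

section Red

variable {k R A : Type} [Field k] [Ring R] [Algebra k R] [Ring A] [Algebra k A]
  {V : Submodule k R} (G : GrRealization k R A V) {d : ℕ} (b : Fin d → V)

/-- A word is *reducible* if its image in `gr R` is a combination of images of
lexicographically smaller words of the same length. -/
def Red (l : List (Fin d)) : Prop :=
  wA G b l ∈ Submodule.span k {x : A | ∃ l' : List (Fin d),
    l'.length = l.length ∧ List.Lex (· < ·) l' l ∧ wA G b l' = x}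

lemma red_of_eq_zero {l : List (Fin d)} (h : wA G b l = 0) : Red G b l := by
  rw [Red, h]; exact Submodule.zero_mem _

lemma red_factor {f : List (Fin d)} (p s : List (Fin d)) (hf : Red G b f) :
    Red G b (p ++ f ++ s) := by
  classical
  set T : A →ₗ[k] A := (LinearMap.mulRight k (wA G b s)).comp (LinearMap.mulLeft k (wA G b p))
    with hT
  have hTx : ∀ x : A, T x = wA G b p * x * wA G b s := fun x => rfl
  have h1 : wA G b (p ++ f ++ s) = T (wA G b f) := by
    rw [hTx, wA_append, wA_append]
  have h2 : T (wA G b f) ∈ Submodule.map T (Submodule.span k _) := Submodule.mem_map_of_mem hf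
  rw [Submodule.map_span] at h2
  rw [Red, h1]
  refine Submodule.span_le.mpr ?_ h2
  rintro x ⟨y, ⟨l', hlen, hlex, rfl⟩, rfl⟩
  apply Submodule.subset_span
  refine ⟨p ++ l' ++ s, by simp [hlen], ?_, by rw [hTx, wA_append, wA_append]⟩
  rw [List.append_assoc p l' s, List.append_assoc p f s]
  exact List.Lex.append_left _ (lex_append_of_lex hlen hlex s s) p

lemma red_of_blocks {n : ℕ} (c : Equiv.Perm (Fin n) → ℤ) (σ₀ : Equiv.Perm (Fin n))
    (hσ₀ : c σ₀ = 1 ∨ c σ₀ = -1)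
    (hid : ∀ a : Fin n → A,
      ∑ σ : Equiv.Perm (Fin n), c σ • ((List.finRange n).map fun i => a (σ i)).prod = 0)
    (v : Fin n → List (Fin d)) (hv : ∀ i j : Fin n, i < j → Rel (v i) (v j)) :
    Red G b (((List.finRange n).map v).flatten) := by
  classical
  set P : Equiv.Perm (Fin n) → A :=
    fun τ => wA G b (((List.finRange n).map (v ∘ τ)).flatten) with hP
  have hPprod : ∀ τ : Equiv.Perm (Fin n),
      P τ = ((List.finRange n).map fun i => wA G b (v (τ i))).prod := by
    intro τ
    have hτ : P τ = wA G b (((List.finRange n).map (v ∘ τ)).flatten) := rfl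
    rw [hτ, wA_flatten, List.map_map]
    rfl
  have key := hid (fun i => wA G b (v (σ₀⁻¹ i)))
  have hre : ∑ τ : Equiv.Perm (Fin n), c (σ₀ * τ) • P τ = 0 := by
    have hcomp := Equiv.sum_comp (Equiv.mulLeft σ₀)
      (fun σ => c σ • ((List.finRange n).map fun i => wA G b (v (σ₀⁻¹ (σ i)))).prod)
    rw [key] at hcomp
    rw [← hcomp]
    apply Finset.sum_congr rfl
    intro τ _
    rw [hPprod τ]
    simp only [Equiv.coe_mulLeft, Equiv.Perm.mul_apply, Equiv.Perm.inv_def,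
      Equiv.symm_apply_apply]
  have hsep : c (σ₀ * 1) • P 1 + ∑ τ ∈ Finset.univ.erase 1, c (σ₀ * τ) • P τ = 0 := by
    rw [Finset.add_sum_erase Finset.univ (fun τ => c (σ₀ * τ) • P τ) (Finset.mem_univ 1)]
    exact hre
  rw [mul_one] at hsep
  have hveq : v ∘ ⇑(1 : Equiv.Perm (Fin n)) = v := funext fun i => by simp
  have hP1 : P 1 = wA G b (((List.finRange n).map v).flatten) := by
    show wA G b (((List.finRange n).map (v ∘ ⇑(1 : Equiv.Perm (Fin n)))).flatten) = _
    rw [hveq]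
  have hsum_mem : ∑ τ ∈ Finset.univ.erase 1, c (σ₀ * τ) • P τ ∈
      Submodule.span k {x : A | ∃ l' : List (Fin d),
        l'.length = (((List.finRange n).map v).flatten).length ∧
        List.Lex (· < ·) l' (((List.finRange n).map v).flatten) ∧ wA G b l' = x} := by
    apply Submodule.sum_mem
    intro τ hτ
    have hτ1 : τ ≠ 1 := (Finset.mem_erase.mp hτ).1
    refine zsmul_mem (Submodule.subset_span ?_) _
    exact ⟨((List.finRange n).map (v ∘ τ)).flatten, perm_flatten_length v τ,
      perm_flatten_lt v hv τ hτ1, rfl⟩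
  rw [Red, ← hP1]
  rcases hσ₀ with h | h
  · rw [h, one_smul] at hsep
    rw [eq_neg_of_add_eq_zero_left hsep]
    exact Submodule.neg_mem _ hsum_mem
  · rw [h] at hsep
    have hneg : (-1 : ℤ) • P 1 = -P 1 := by simp
    rw [hneg] at hsep
    rw [neg_add_eq_zero.mp hsep]
    exact hsum_mem

end Red

section Vanish

variable {k R A : Type} [Field k] [Ring R] [Algebra k R] [Ring A] [Algebra k A]
  {V : Submodule k R} (G : GrRealization k R A V) {d : ℕ} (b : Fin d → V)

lemma all_zero_of_all_red (m : ℕ)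
    (hall : ∀ l : List (Fin d), l.length = m → Red G b l) :
    ∀ l : List (Fin d), l.length = m → wA G b l = 0 := by
  classical
  by_contra h
  push_neg at h
  obtain ⟨l₀, hlen₀, hne₀⟩ := h
  have hfin : {l : List (Fin d) | l.length = m ∧ wA G b l ≠ 0}.Finite :=
    (List.finite_length_eq (Fin d) m).subset fun l hl => hl.1
  have hne : hfin.toFinset.Nonempty :=
    ⟨l₀, by rw [Set.Finite.mem_toFinset]; exact ⟨hlen₀, hne₀⟩⟩
  set l₁ := hfin.toFinset.min' hne with hl₁def
  have hl₁ : l₁.length = m ∧ wA G b l₁ ≠ 0 := by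
    have := hfin.toFinset.min'_mem hne
    rwa [Set.Finite.mem_toFinset] at this
  apply hl₁.2
  have hred := hall l₁ hl₁.1
  rw [Red] at hred
  have hzero : Submodule.span k {x : A | ∃ l' : List (Fin d), l'.length = l₁.length ∧
      List.Lex (· < ·) l' l₁ ∧ wA G b l' = x} ≤ ⊥ := by
    rw [Submodule.span_le]
    rintro x ⟨l', hlen', hlex', rfl⟩
    show wA G b l' ∈ (⊥ : Submodule k A)
    rw [Submodule.mem_bot]
    by_contra hx
    have hmem : l' ∈ hfin.toFinset := by
      rw [Set.Finite.mem_toFinset]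
      exact ⟨hlen'.trans hl₁.1, hx⟩
    have hle : l₁ ≤ l' := hfin.toFinset.min'_le l' hmem
    exact absurd (hlex' : l' < l₁) (not_lt.mpr hle)
  exact (Submodule.mem_bot k).mp (hzero hred)

lemma wProd_append (l₁ l₂ : List (Fin d)) :
    wProd b (l₁ ++ l₂) = wProd b l₁ * wProd b l₂ := by
  simp [wProd]

lemma pow_words (hVspan : V = Submodule.span k (Set.range fun i : Fin d => (b i : R))) :
    ∀ j : ℕ, (V ^ j : Submodule k R) =
      Submodule.span k {y : R | ∃ l : List (Fin d), l.length = j ∧ wProd b l = y} := by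
  intro j
  induction j with
  | zero =>
      rw [pow_zero]
      have hset : {y : R | ∃ l : List (Fin d), l.length = 0 ∧ wProd b l = y} = {1} := by
        ext y
        constructor
        · rintro ⟨l, hlen, rfl⟩
          rw [List.length_eq_zero_iff.mp hlen]
          simp [wProd]
        · rintro rfl
          exact ⟨[], rfl, by simp [wProd]⟩
      rw [hset]
      exact Submodule.one_eq_span
  | succ j ih =>
      rw [pow_succ, ih]
      have hmul : Submodule.span k {y : R | ∃ l : List (Fin d), l.length = j ∧ wProd b l = y} * V
          = Submodule.span k {y : R | ∃ l : List (Fin d), l.length = j ∧ wProd b l = y} *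
            Submodule.span k (Set.range fun i : Fin d => (b i : R)) :=
        congrArg (fun M => Submodule.span k
          {y : R | ∃ l : List (Fin d), l.length = j ∧ wProd b l = y} * M) hVspan
      rw [hmul, Submodule.span_mul_span]
      congr 1
      ext y
      constructor
      · rintro hy
        rw [Set.mem_mul] at hy
        obtain ⟨u, ⟨l, hlen, rfl⟩, w, ⟨i, rfl⟩, rfl⟩ := hy
        refine ⟨l ++ [i], by simp [hlen], ?_⟩
        rw [wProd_append]
        simp [wProd]
      · rintro ⟨l, hlen, rfl⟩
        have hlne : l ≠ [] := by
          intro hc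
          rw [hc] at hlen
          simp at hlen
        have hsplit : l.dropLast ++ [l.getLast hlne] = l := List.dropLast_append_getLast hlne
        rw [← hsplit, wProd_append]
        apply Set.mul_mem_mul
        · exact ⟨l.dropLast, by rw [List.length_dropLast, hlen]; rfl, rfl⟩
        · refine ⟨l.getLast hlne, ?_⟩
          simp [wProd]

lemma pow_le_of_all_zero (hVspan : V = Submodule.span k (Set.range fun i : Fin d => (b i : R)))
    (m' : ℕ) (hzero : ∀ l : List (Fin d), l.length = m' + 1 → wA G b l = 0) :
    V ^ (m' + 1) ≤ V ^ m' := by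
  have hφ : ∀ (y : R) (hy : y ∈ Submodule.span k
        {y : R | ∃ l : List (Fin d), l.length = m' + 1 ∧ wProd b l = y}),
      ∀ hy' : y ∈ V ^ (m' + 1), G.φ (m' + 1) ⟨y, hy'⟩ = 0 := by
    intro y hy
    induction hy using Submodule.span_induction with
    | mem y hy' =>
        obtain ⟨l, hlen, rfl⟩ := hy'
        intro hmem
        have : G.φ (m' + 1) ⟨wProd b l, hmem⟩ = wA G b l :=
          phi_congr G hlen.symm _ _ rfl
        rw [this]
        exact hzero l hlen
    | zero =>
        intro hmem
        have : (⟨0, hmem⟩ : (V ^ (m' + 1) : Submodule k R)) = 0 := Subtype.ext rfl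
        rw [this, map_zero]
    | add x y hx hy ihx ihy =>
        intro hmem
        have hxV : x ∈ V ^ (m' + 1) := by rw [pow_words b hVspan (m' + 1)]; exact hx
        have hyV : y ∈ V ^ (m' + 1) := by rw [pow_words b hVspan (m' + 1)]; exact hy
        have : (⟨x + y, hmem⟩ : (V ^ (m' + 1) : Submodule k R)) = ⟨x, hxV⟩ + ⟨y, hyV⟩ :=
          Subtype.ext rfl
        rw [this, map_add, ihx hxV, ihy hyV, add_zero]
    | smul a x hx ihx =>
        intro hmem
        have hxV : x ∈ V ^ (m' + 1) := by rw [pow_words b hVspan (m' + 1)]; exact hx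
        have : (⟨a • x, hmem⟩ : (V ^ (m' + 1) : Submodule k R)) = a • ⟨x, hxV⟩ :=
          Subtype.ext rfl
        rw [this, map_smul, ihx hxV, smul_zero]
  intro x hx
  have h0 : G.φ (m' + 1) ⟨x, hx⟩ = 0 := by
    apply hφ x ?_ hx
    rw [← pow_words b hVspan (m' + 1)]
    exact hx
  have hker : (⟨x, hx⟩ : (V ^ (m' + 1) : Submodule k R)) ∈ LinearMap.ker (G.φ (m' + 1)) :=
    LinearMap.mem_ker.mpr h0
  rw [G.ker_succ m'] at hker
  exact hker

end Vanish

section Koenig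

variable {γ : Type} [Finite γ]

lemma getD_append_len (u t : List γ) (a x₀ : γ) :
    (u ++ a :: t).getD u.length x₀ = a := by
  rw [List.getD_eq_getElem?_getD, List.getElem?_append_right (le_refl u.length)]
  simp

lemma getD_append_len' (u t : List γ) (a x₀ : γ) (n : ℕ) (hn : n = u.length) :
    (u ++ a :: t).getD n x₀ = a := by
  subst hn
  exact getD_append_len u t a x₀

/-- König's lemma: a prefix-closed set of words with arbitrarily long members
contains all prefixes of some infinite word. -/
lemma koenig {B : Set (List γ)}
    (hpref : ∀ l ∈ B, ∀ p, p <+: l → p ∈ B)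
    (hlong : ∀ m, ∃ l ∈ B, l.length = m) :
    ∃ W : ℕ → γ, ∀ m, win W 0 m ∈ B := by
  classical
  -- a default letter
  obtain ⟨l₁, hl₁, hlen₁⟩ := hlong 1
  obtain ⟨x₀, t₀, rfl⟩ : ∃ x t, l₁ = x :: t := by
    cases l₁ with
    | nil => simp at hlen₁
    | cons x t => exact ⟨x, t, rfl⟩
  set Good : List γ → Prop := fun u => ∀ m, ∃ l ∈ B, u <+: l ∧ u.length + m ≤ l.length
    with hGood
  have hGoodB : ∀ u, Good u → u ∈ B := by
    intro u hu
    obtain ⟨l, hl, hul, -⟩ := hu 0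
    exact hpref l hl u hul
  have hnil : Good [] := by
    intro m
    obtain ⟨l, hl, hlen⟩ := hlong m
    exact ⟨l, hl, List.nil_prefix, by simp [hlen]⟩
  have hstep : ∀ u, Good u → ∃ x : γ, Good (u ++ [x]) := by
    intro u hu
    have hchoice : ∀ m : ℕ, ∃ l, l ∈ B ∧ u <+: l ∧ u.length + (m + 1) ≤ l.length :=
      fun m => hu (m + 1)
    set f : ℕ → γ := fun m => ((hchoice m).choose).getD u.length x₀ with hf
    obtain ⟨x, hx⟩ := exists_freq f (Set.infinite_univ (α := ℕ))
    refine ⟨x, fun m => ?_⟩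
    obtain ⟨m', hm', -, hfm'⟩ := hx m
    obtain ⟨hlB, hul, hlen⟩ := (hchoice m').choose_spec
    set l := (hchoice m').choose
    refine ⟨l, hlB, ?_, ?_⟩
    · -- u ++ [x] <+: l
      obtain ⟨t, ht⟩ := hul
      cases t with
      | nil =>
          exfalso
          have : l.length = u.length := by rw [← ht]; simp
          omega
      | cons a t' =>
          have hxa : x = a := by
            rw [← hfm', hf]
            show l.getD u.length x₀ = a
            rw [← ht, getD_append_len]
          rw [hxa, ← ht]
          exact ⟨t', by simp⟩
    · have : (u ++ [x]).length = u.length + 1 := by simp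
      omega
  -- build the chain
  set ch : ℕ → {u : List γ // Good u} := fun n => Nat.rec (motive := fun _ => {u : List γ // Good u}) ⟨[], hnil⟩
    (fun _ p => ⟨p.1 ++ [(hstep p.1 p.2).choose], (hstep p.1 p.2).choose_spec⟩) n with hch
  have hchlen : ∀ n, (ch n).1.length = n := by
    intro n
    induction n with
    | zero => rfl
    | succ n ih =>
        have : (ch (n + 1)).1 = (ch n).1 ++ [(hstep (ch n).1 (ch n).2).choose] := rfl
        rw [this]
        simp [ih]
  refine ⟨fun i => (ch (i + 1)).1.getD i x₀, fun m => ?_⟩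
  have hwin : ∀ m, win (fun i => (ch (i + 1)).1.getD i x₀) 0 m = (ch m).1 := by
    intro m
    induction m with
    | zero =>
        have h0 : win (fun i => (ch (i + 1)).1.getD i x₀) 0 0 = [] := by simp [win]
        rw [h0]
        rfl
    | succ m ih =>
        rw [win_succ, ih]
        have hsucc : (ch (m + 1)).1 = (ch m).1 ++ [(hstep (ch m).1 (ch m).2).choose] := rfl
        rw [hsucc]
        congr 1
        have hgd : (ch (m + 1)).1.getD m x₀ = (hstep (ch m).1 (ch m).2).choose := by
          rw [hsucc]
          exact getD_append_len' _ _ _ _ _ (hchlen m).symm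
        simp only [Nat.zero_add]
        rw [hgd]
  rw [hwin m]
  exact hGoodB _ (ch m).2

end Koenig
end PIGr

open PIGr in
/-- If `R` is a finitely generated algebraic algebra over `k` and the associated graded
ring `gr R` satisfies a polynomial identity, then `R` is finite dimensional over `k`. -/
theorem finiteDimensional_of_gr_PI {k R A : Type} [Field k] [Ring R] [Algebra k R]
    [Ring A] [Algebra k A] (V : Submodule k R) (h1 : (1 : R) ∈ V)
    [FiniteDimensional k V] (hgen : Algebra.adjoin k (V : Set R) = ⊤)
    [Algebra.IsAlgebraic k R] (G : GrRealization k R A V)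
    (hPI : SatisfiesPolyIdentity A) :
    FiniteDimensional k R := by
  classical
  rcases subsingleton_or_nontrivial R with hsub | hnt
  · haveI : Finite R := Finite.of_subsingleton
    infer_instance
  by_contra hinf
  -- a finite generating family for V
  set d := Module.finrank k V with hd
  set bV : Module.Basis (Fin d) k V := Module.finBasis k V with hbV
  set b : Fin d → V := ⇑bV with hb
  have hVspan : V = Submodule.span k (Set.range fun i : Fin d => (b i : R)) := by
    apply le_antisymm
    · intro x hx
      have hx' : (⟨x, hx⟩ : V) ∈ Submodule.span k (Set.range ⇑bV) := by
        rw [bV.span_eq]; trivial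
      have h2 := Submodule.mem_map_of_mem (f := V.subtype) hx'
      rw [Submodule.map_span] at h2
      have hset : V.subtype '' Set.range ⇑bV = Set.range fun i : Fin d => (b i : R) := by
        rw [← Set.range_comp]; rfl
      rw [hset] at h2
      exact h2
    · rw [Submodule.span_le]
      rintro _ ⟨i, rfl⟩
      exact (b i).2
  -- no stabilization of the filtration (otherwise R would be finite dimensional)
  have hnostab : ∀ m' : ℕ, ¬ (V ^ (m' + 1) ≤ V ^ m') := by
    intro m' hle
    apply hinf
    have hstab : ∀ t, V ^ t ≤ V ^ m' := by
      intro t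
      induction t with
      | zero => exact pow_le_pow_V h1 (Nat.zero_le m')
      | succ t ih =>
          rcases le_or_gt (t + 1) m' with h | h
          · exact pow_le_pow_V h1 h
          · calc V ^ (t + 1) = V ^ t * V := pow_succ V t
              _ ≤ V ^ m' * V := mul_le_mul' ih le_rfl
              _ = V ^ (m' + 1) := (pow_succ V m').symm
              _ ≤ V ^ m' := hle
    have hsp : Submodule.span k ((Submonoid.closure (V : Set R) : Submonoid R) : Set R)
        = ⊤ := by
      rw [← Algebra.adjoin_eq_span, hgen]
      rfl
    have htop : (⊤ : Submodule k R) ≤ V ^ m' := by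
      rw [← hsp, Submodule.span_le]
      intro x hx
      induction hx using Submonoid.closure_induction with
      | mem y hy => exact hstab 1 (by rwa [pow_one])
      | one => exact hstab 0 (by rw [pow_zero]; exact Submodule.one_le.mp le_rfl)
      | mul x y hx' hy' ihx ihy =>
          have := Submodule.mul_mem_mul ihx ihy
          rw [← pow_add] at this
          exact hstab (m' + m') this
    have hfgV : V.FG := Module.Finite.iff_fg.mp inferInstance
    have hfg : (V ^ m').FG := hfgV.pow m'
    have heq : V ^ m' = ⊤ := le_antisymm le_top htop
    rw [heq] at hfg
    exact Module.finite_def.mpr hfg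
  -- the set of irreducible words
  set Bset : Set (List (Fin d)) := {l | ¬ Red G b l} with hBset
  have hBpref : ∀ l ∈ Bset, ∀ p, p <+: l → p ∈ Bset := by
    rintro l hl p ⟨t, rfl⟩ --
    intro hredp
    exact hl (red_factor G b [] t hredp)
  have hBfac : ∀ l ∈ Bset, ∀ p f s, l = p ++ f ++ s → f ∈ Bset := by
    intro l hl p f s hpfs hredf
    exact hl (hpfs ▸ red_factor G b p s hredf)
  have hBlong : ∀ m, ∃ l ∈ Bset, l.length = m := by
    intro m
    by_contra hc
    push_neg at hc
    have hall : ∀ l : List (Fin d), l.length = m → Red G b l := by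
      intro l hlm
      by_contra hr
      exact absurd hlm (hc l hr)
    cases m with
    | zero =>
        have h0 := all_zero_of_all_red G b 0 hall [] rfl
        rw [wA_nil] at h0
        have hz : ∀ l : List (Fin d), l.length = 0 + 1 → wA G b l = 0 := fun l _ => by
          calc wA G b l = 1 * wA G b l := (one_mul _).symm
            _ = 0 * wA G b l := by rw [h0]
            _ = 0 := zero_mul _
        exact hnostab 0 (pow_le_of_all_zero G b hVspan 0 hz)
    | succ m' =>
        exact hnostab m' (pow_le_of_all_zero G b hVspan m'
          (all_zero_of_all_red G b (m' + 1) hall))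
  -- König: an infinite word all of whose factors are irreducible
  obtain ⟨W, hW⟩ := koenig hBpref hBlong
  have hwin : ∀ i L, win W i L ∈ Bset := by
    intro i L
    have h2 : win W 0 (i + L) = win W 0 i ++ win W i L := by
      rw [win_add]
      simp
    exact hBfac _ (hW (i + L)) (win W 0 i) (win W i L) [] (by rw [h2, List.append_nil])
  -- tails of W are pairwise distinct (otherwise a power of a word would be irreducible)
  have htails : ∀ i j : ℕ, i < j → ∃ x, W (i + x) ≠ W (j + x) := by
    intro i j hij
    by_contra hcon
    push_neg at hcon
    set z := win W i (j - i) with hz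
    have hzne : z ≠ [] := by
      apply List.ne_nil_of_length_pos
      rw [hz, length_win]
      omega
    obtain ⟨e, he1, hez⟩ := exists_replicate_zero h1 G b z hzne
    have hshift : ∀ L, win W (i + (j - i)) L = win W i L := by
      intro L
      apply List.map_congr_left
      intro p _
      rw [show i + (j - i) = j from by omega]
      exact (hcon p).symm
    have hrep : ∀ e', (List.replicate e' z).flatten = win W i ((j - i) * e') := by
      intro e'
      induction e' with
      | zero => simp [win]
      | succ e' ih =>
          rw [List.replicate_succ, List.flatten_cons, ih,
            show (j - i) * (e' + 1) = (j - i) + (j - i) * e' from by ring, win_add,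
            hshift, hz]
    exact (hwin i ((j - i) * e)) (red_of_eq_zero G b (by rw [← hrep e]; exact hez))
  -- conclude with the polynomial identity
  obtain ⟨n, hn, c, ⟨σ₀, hσ₀⟩, hid⟩ := hPI
  obtain ⟨i, L, v, hvrel, hvflat⟩ := exists_blocks W htails n hn
  have hred := red_of_blocks G b c σ₀ hσ₀ hid v hvrel
  rw [hvflat] at hred
  exact (hwin i L) hred
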